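/- Let ν be strictly dominant, N ∈ ℤ, and m > 0 an integer. If g, g' ∈ U_N and (f_ν(g))⁻¹·f_ν(g') ∈ U_{m,N}, then g⁻¹·g' ∈ U_{m,N}. Consequently, the map induced by f_ν on the set of right U_{m,N}-cosets in U_N is a bijection. -/

import Mathlib

noncomputable section

open Matrix

/-- The ε-adic valuation on `L = k̄((ε))`, with `val 0 = ∞`. -/
def val {K : Type*} [Field K] (x : LaurentSeries K) : WithTop ℤ := x.orderTop

/-- The uniformizer ε of the Laurent series field. -/
def eps (K : Type*) [Field K] : LaurentSeries K := HahnSeries.single 1 1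

/-- `σ : L → L` is the Frobenius automorphism: it fixes ε and raises each Laurent-series
coefficient to the `q`-th power.  (This property determines `σ` uniquely.) -/
def IsFrobenius (K : Type*) [Field K] (q : ℕ)
    (σ : LaurentSeries K → LaurentSeries K) : Prop :=
  ∀ (x : LaurentSeries K) (n : ℤ), (σ x).coeff n = (x.coeff n) ^ q

/-- Upper unitriangular matrix: an element of `U_1`. -/
def Unitri {K : Type*} [Field K] {n : ℕ}
    (g : Matrix (Fin n) (Fin n) (LaurentSeries K)) : Prop :=
  (∀ i, g i i = 1) ∧ (∀ i j : Fin n, j < i → g i j = 0)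

/-- `ν = (ν_1, …, ν_n)` is strictly dominant: `ν_1 > ν_2 > … > ν_n`. -/
def StrictDominant {n : ℕ} (ν : Fin n → ℤ) : Prop :=
  ∀ p q : Fin n, p < q → ν q < ν p

/-- The diagonal matrix `ε^ν = diag(ε^{ν_1}, …, ε^{ν_n})`. -/
def epsDiag (K : Type*) [Field K] {n : ℕ} (ν : Fin n → ℤ) :
    Matrix (Fin n) (Fin n) (LaurentSeries K) :=
  Matrix.diagonal fun i => eps K ^ (ν i)

/-- The map `f_ν : U_1 → U_1`, `f_ν(h) = h⁻¹ · ε^ν · σ(h) · ε^{−ν}`. -/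
def fnu {K : Type*} [Field K] {n : ℕ} (σ : LaurentSeries K → LaurentSeries K)
    (ν : Fin n → ℤ) (g : Matrix (Fin n) (Fin n) (LaurentSeries K)) :
    Matrix (Fin n) (Fin n) (LaurentSeries K) :=
  g⁻¹ * epsDiag K ν * g.map σ * epsDiag K (fun i => -ν i)

/-- The subgroup `U(o_L)` of `U_1`: unitriangular matrices with entries in `o_L`. -/
def UO (K : Type*) [Field K] (n : ℕ) :
    Set (Matrix (Fin n) (Fin n) (LaurentSeries K)) :=
  {g | Unitri g ∧ ∀ p q : Fin n, 0 ≤ val (g p q)}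

/-- `U_N = {g ∈ U_1 : val(g_{pq}) ≥ (q−p)·N for all p < q}`
(equivalently `ε^{−μ}·U(o_L)·ε^{μ}` for `μ = (N, 2N, …, nN)`). -/
def UN (K : Type*) [Field K] (n : ℕ) (N : ℤ) :
    Set (Matrix (Fin n) (Fin n) (LaurentSeries K)) :=
  {g | Unitri g ∧ ∀ p q : Fin n, p < q →
    ((((q : ℤ) - (p : ℤ)) * N : ℤ) : WithTop ℤ) ≤ val (g p q)}

/-- `U_{m,N} = {g ∈ U_1 : val(g_{pq}) ≥ (q−p)·N + m for all p < q}`. -/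
def UmN (K : Type*) [Field K] (n : ℕ) (m N : ℤ) :
    Set (Matrix (Fin n) (Fin n) (LaurentSeries K)) :=
  {g | Unitri g ∧ ∀ p q : Fin n, p < q →
    ((((q : ℤ) - (p : ℤ)) * N + m : ℤ) : WithTop ℤ) ≤ val (g p q)}

namespace Aux
open HahnSeries Finset
variable {K : Type*} [Field K]

lemma val_zero : val (0 : LaurentSeries K) = ⊤ := HahnSeries.orderTop_zero
lemma val_one : val (1 : LaurentSeries K) = 0 := HahnSeries.orderTop_one
lemma val_add_ge {x y : LaurentSeries K} {c : WithTop ℤ} (hx : c ≤ val x) (hy : c ≤ val y) :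
    c ≤ val (x + y) := le_trans (le_min hx hy) HahnSeries.min_orderTop_le_orderTop_add
lemma val_neg {x : LaurentSeries K} : val (-x) = val x := HahnSeries.orderTop_neg
lemma val_mul_ge {x y : LaurentSeries K} {c d : WithTop ℤ} (hx : c ≤ val x) (hy : d ≤ val y) :
    c + d ≤ val (x * y) :=
  le_trans (add_le_add hx hy) (HahnSeries.orderTop_mul _ _).ge
lemma val_sum_ge {α : Type*} {s : Finset α} {f : α → LaurentSeries K} {c : WithTop ℤ}
    (h : ∀ a ∈ s, c ≤ val (f a)) : c ≤ val (∑ a ∈ s, f a) := by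
  classical
  induction s using Finset.induction_on with
  | empty => simp [val_zero]
  | insert _ _ hnot ih =>
      rw [Finset.sum_insert hnot]
      exact val_add_ge (h _ (Finset.mem_insert_self _ _))
        (ih fun a ha => h a (Finset.mem_insert_of_mem ha))

lemma eps_ne_zero : eps K ≠ 0 := HahnSeries.single_ne_zero one_ne_zero

lemma eps_pow_nat (k : ℕ) : (eps K) ^ k = HahnSeries.single (k : ℤ) 1 := by
  induction k with
  | zero => simp [HahnSeries.single_zero_one]
  | succ k ih =>
      rw [pow_succ, ih]
      unfold eps
      rw [HahnSeries.single_mul_single, one_mul]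
      norm_num

lemma eps_zpow (k : ℤ) : (eps K) ^ k = HahnSeries.single k 1 := by
  cases k with
  | ofNat k => simpa using eps_pow_nat (K := K) k
  | negSucc k =>
      rw [zpow_negSucc, eps_pow_nat]
      refine inv_eq_of_mul_eq_one_right ?_
      rw [HahnSeries.single_mul_single, one_mul]
      have : ((k + 1 : ℕ) : ℤ) + Int.negSucc k = 0 := by
        rw [Int.negSucc_eq]; push_cast; ring
      rw [this, HahnSeries.single_zero_one]

lemma val_eps_zpow (k : ℤ) : val ((eps K) ^ k) = (k : WithTop ℤ) := by
  rw [eps_zpow]; exact HahnSeries.orderTop_single one_ne_zero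

lemma eps_zpow_mul (a b : ℤ) : eps K ^ a * eps K ^ b = eps K ^ (a + b) :=
  (zpow_add₀ eps_ne_zero a b).symm

lemma val_le_val_of_coeff {x y : LaurentSeries K}
    (h : ∀ i : ℤ, y.coeff i ≠ 0 → x.coeff i ≠ 0) : val x ≤ val y := by
  rcases eq_or_ne y 0 with rfl | hy
  · rw [val_zero]; exact le_top
  · obtain ⟨g, hg⟩ : ∃ g : ℤ, y.orderTop = (g : WithTop ℤ) := by
      have := HahnSeries.orderTop_ne_top.mpr hy
      exact ⟨(y.orderTop).untop this, (WithTop.coe_untop _ this).symm⟩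
    have hcy : y.coeff g ≠ 0 := HahnSeries.coeff_orderTop_ne hg
    have := HahnSeries.orderTop_le_of_coeff_ne_zero (h g hcy)
    show x.orderTop ≤ y.orderTop
    rw [hg]; exact this

lemma val_map (φ : K →+* K) (x : LaurentSeries K) : val (x.map φ) = val x := by
  have hinj : Function.Injective φ := φ.injective
  have hco : ∀ i : ℤ, (x.map φ).coeff i = φ (x.coeff i) := fun i => rfl
  have key : ∀ i : ℤ, (x.map φ).coeff i ≠ 0 ↔ x.coeff i ≠ 0 := by
    intro i
    rw [hco]
    constructor
    · intro h h0; exact h (by rw [h0, map_zero])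
    · intro h h0; exact h (hinj (by rw [h0, map_zero]))
  apply le_antisymm
  · exact val_le_val_of_coeff fun i hi => (key i).mpr hi
  · exact val_le_val_of_coeff fun i hi => (key i).mp hi

end Aux

namespace Aux
open Finset
variable {K : Type*} [Field K] {n : ℕ}

abbrev Mat (K : Type*) [Field K] (n : ℕ) := Matrix (Fin n) (Fin n) (LaurentSeries K)

def SU (x : Mat K n) : Prop := ∀ p q : Fin n, ¬ p < q → x p q = 0

def Lvl (N j : ℤ) (x : Mat K n) : Prop :=
  SU x ∧ ∀ p q : Fin n, p < q →
    ((((q : ℤ) - (p : ℤ)) * N + j : ℤ) : WithTop ℤ) ≤ val (x p q)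

def Gr (N j : ℤ) : Set (Mat K n) := {g | Lvl N j (g - 1)}

lemma coe_le_coe_int {a b : ℤ} (h : a ≤ b) : (a : WithTop ℤ) ≤ (b : WithTop ℤ) :=
  WithTop.coe_le_coe.mpr h

lemma Lvl.mono {N i j : ℤ} {x : Mat K n} (h : Lvl N j x) (hij : i ≤ j) : Lvl N i x :=
  ⟨h.1, fun p q hpq => le_trans (coe_le_coe_int (by linarith)) (h.2 p q hpq)⟩

lemma Gr.mono {N i j : ℤ} (hij : i ≤ j) : (Gr N j : Set (Mat K n)) ⊆ Gr N i :=
  fun _ hg => Lvl.mono hg hij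

lemma Lvl.zero {N j : ℤ} : Lvl N j (0 : Mat K n) :=
  ⟨fun _ _ _ => rfl, fun p q _ => by
    show _ ≤ val (0 : LaurentSeries K)
    rw [val_zero]; exact le_top⟩

lemma Lvl.add {N j : ℤ} {x y : Mat K n} (hx : Lvl N j x) (hy : Lvl N j y) :
    Lvl N j (x + y) :=
  ⟨fun p q h => by
      show x p q + y p q = 0
      rw [hx.1 p q h, hy.1 p q h, add_zero],
   fun p q h => val_add_ge (hx.2 p q h) (hy.2 p q h)⟩

lemma Lvl.neg {N j : ℤ} {x : Mat K n} (hx : Lvl N j x) : Lvl N j (-x) :=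
  ⟨fun p q h => by show -(x p q) = 0; rw [hx.1 p q h, neg_zero],
   fun p q h => by
      show _ ≤ val (-(x p q))
      rw [val_neg]; exact hx.2 p q h⟩

lemma Lvl.sum {N j : ℤ} {α : Type*} {s : Finset α} {f : α → Mat K n}
    (h : ∀ a ∈ s, Lvl N j (f a)) : Lvl N j (∑ a ∈ s, f a) := by
  classical
  induction s using Finset.induction_on with
  | empty => simpa using Lvl.zero
  | insert _ _ hnot ih =>
      rw [Finset.sum_insert hnot]
      exact Lvl.add (h _ (Finset.mem_insert_self _ _))
        (ih fun a ha => h a (Finset.mem_insert_of_mem ha))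

def UT (N : ℤ) (w : Mat K n) : Prop :=
  (∀ p q : Fin n, ¬ p ≤ q → w p q = 0) ∧ ∀ p q : Fin n, p ≤ q →
    ((((q : ℤ) - (p : ℤ)) * N : ℤ) : WithTop ℤ) ≤ val (w p q)

lemma UT_of_Gr {N : ℤ} {g : Mat K n} (hg : g ∈ Gr N 0) : UT N g := by
  have hE : ∀ p q : Fin n, g p q = (g - 1) p q + (1 : Mat K n) p q := by
    intro p q; simp [Matrix.sub_apply]
  constructor
  · intro p q h
    have hne : p ≠ q := fun he => h (le_of_eq he)
    have hnlt : ¬ p < q := fun hlt => h (le_of_lt hlt)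
    rw [hE, hg.1 p q hnlt, Matrix.one_apply_ne hne, add_zero]
  · intro p q hpq
    rcases eq_or_lt_of_le hpq with heq | hlt
    · subst heq
      rw [hE, hg.1 p p (lt_irrefl p), Matrix.one_apply_eq, zero_add, val_one]
      have h0 : (((p : ℤ) - (p : ℤ)) * N : ℤ) = 0 := by ring
      rw [h0]; simp
    · have hne : p ≠ q := ne_of_lt hlt
      rw [hE, Matrix.one_apply_ne hne, add_zero]
      have := hg.2 p q hlt
      simpa using this

lemma UT.mul_lvl {N j : ℤ} {w x : Mat K n} (hw : UT N w) (hx : Lvl N j x) :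
    Lvl N j (w * x) := by
  constructor
  · intro p q h
    rw [Matrix.mul_apply]
    refine Finset.sum_eq_zero fun r _ => ?_
    by_cases hpr : p ≤ r
    · by_cases hrq : r < q
      · exact absurd (lt_of_le_of_lt hpr hrq) h
      · rw [hx.1 r q hrq, mul_zero]
    · rw [hw.1 p r hpr, zero_mul]
  · intro p q hpq
    rw [Matrix.mul_apply]
    refine val_sum_ge fun r _ => ?_
    by_cases hpr : p ≤ r
    · by_cases hrq : r < q
      · have e : ((((q : ℤ) - (p : ℤ)) * N + j : ℤ)) =
            (((r : ℤ) - (p : ℤ)) * N) + ((((q : ℤ) - (r : ℤ)) * N + j)) := by ring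
        rw [e, WithTop.coe_add]
        exact val_mul_ge (hw.2 p r hpr) (hx.2 r q hrq)
      · rw [hx.1 r q hrq, mul_zero, val_zero]; exact le_top
    · rw [hw.1 p r hpr, zero_mul, val_zero]; exact le_top

lemma Lvl.mul_ut {N j : ℤ} {x w : Mat K n} (hx : Lvl N j x) (hw : UT N w) :
    Lvl N j (x * w) := by
  constructor
  · intro p q h
    rw [Matrix.mul_apply]
    refine Finset.sum_eq_zero fun r _ => ?_
    by_cases hpr : p < r
    · by_cases hrq : r ≤ q
      · exact absurd (lt_of_lt_of_le hpr hrq) h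
      · rw [hw.1 r q hrq, mul_zero]
    · rw [hx.1 p r hpr, zero_mul]
  · intro p q hpq
    rw [Matrix.mul_apply]
    refine val_sum_ge fun r _ => ?_
    by_cases hpr : p < r
    · by_cases hrq : r ≤ q
      · have e : ((((q : ℤ) - (p : ℤ)) * N + j : ℤ)) =
            ((((r : ℤ) - (p : ℤ)) * N + j)) + (((q : ℤ) - (r : ℤ)) * N) := by ring
        rw [e, WithTop.coe_add]
        exact val_mul_ge (hx.2 p r hpr) (hw.2 r q hrq)
      · rw [hw.1 r q hrq, mul_zero, val_zero]; exact le_top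
    · rw [hx.1 p r hpr, zero_mul, val_zero]; exact le_top

lemma Lvl.mul {N j j' : ℤ} {x y : Mat K n} (hx : Lvl N j x) (hy : Lvl N j' y) :
    Lvl N (j + j') (x * y) := by
  constructor
  · intro p q h
    rw [Matrix.mul_apply]
    refine Finset.sum_eq_zero fun r _ => ?_
    by_cases hpr : p < r
    · by_cases hrq : r < q
      · exact absurd (lt_trans hpr hrq) h
      · rw [hy.1 r q hrq, mul_zero]
    · rw [hx.1 p r hpr, zero_mul]
  · intro p q hpq
    rw [Matrix.mul_apply]
    refine val_sum_ge fun r _ => ?_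
    by_cases hpr : p < r
    · by_cases hrq : r < q
      · have e : ((((q : ℤ) - (p : ℤ)) * N + (j + j') : ℤ)) =
            ((((r : ℤ) - (p : ℤ)) * N + j)) + ((((q : ℤ) - (r : ℤ)) * N + j')) := by ring
        rw [e, WithTop.coe_add]
        exact val_mul_ge (hx.2 p r hpr) (hy.2 r q hrq)
      · rw [hy.1 r q hrq, mul_zero, val_zero]; exact le_top
    · rw [hx.1 p r hpr, zero_mul, val_zero]; exact le_top

end Aux

namespace Aux
open Finset
variable {K : Type*} [Field K] {n : ℕ}

lemma su_pow {x : Mat K n} (hx : SU x) :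
    ∀ (k : ℕ) (p q : Fin n), (q : ℕ) < (p : ℕ) + k → (x ^ k) p q = 0 := by
  intro k
  induction k with
  | zero =>
      intro p q h
      rw [pow_zero]
      exact Matrix.one_apply_ne (fun he => by subst he; omega)
  | succ k ih =>
      intro p q h
      rw [pow_succ, Matrix.mul_apply]
      refine Finset.sum_eq_zero fun r _ => ?_
      by_cases hr : (r : ℕ) < (p : ℕ) + k
      · rw [ih p r hr, zero_mul]
      · have : ¬ r < q := by
          intro hlt
          have : (r : ℕ) < (q : ℕ) := hlt
          omega
        rw [hx r q this, mul_zero]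

lemma su_pow_n {x : Mat K n} (hx : SU x) : x ^ n = 0 := by
  ext p q
  have : (q : ℕ) < (p : ℕ) + n := by have := q.isLt; omega
  rw [su_pow hx n p q this]
  rfl

lemma Lvl.pow {N j : ℤ} {x : Mat K n} (hx : Lvl N j x) (hj : 0 ≤ j) :
    ∀ k : ℕ, 1 ≤ k → Lvl N j (x ^ k) := by
  intro k
  induction k with
  | zero => intro h; omega
  | succ k ih =>
      intro _
      rcases Nat.eq_zero_or_pos k with rfl | hk
      · simpa using hx
      · rw [pow_succ]
        exact (Lvl.mul (ih hk) hx).mono (by linarith)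

lemma one_mem_Gr {N j : ℤ} : (1 : Mat K n) ∈ Gr N j := by
  show Lvl N j ((1 : Mat K n) - 1)
  rw [sub_self]
  exact Lvl.zero

lemma Gr.mul_mem {N j : ℤ} {a b : Mat K n} (ha : a ∈ Gr N j) (hb : b ∈ Gr N j)
    (hj : 0 ≤ j) : a * b ∈ Gr N j := by
  have key : a * b - 1 = (a - 1) * (b - 1) + ((a - 1) + (b - 1)) := by
    simp only [mul_sub, sub_mul, mul_one, one_mul]
    abel
  show Lvl N j (a * b - 1)
  rw [key]
  exact Lvl.add ((Lvl.mul ha hb).mono (by linarith)) (Lvl.add ha hb)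

lemma Gr.inv_full {N j : ℤ} {a : Mat K n} (ha : a ∈ Gr N j) (hj : 0 ≤ j) (hn : 1 ≤ n) :
    a⁻¹ ∈ Gr N j ∧ a * a⁻¹ = 1 ∧ a⁻¹ * a = 1 := by
  have hx : Lvl N j (1 - a) := by
    have := (Lvl.neg ha)
    rwa [neg_sub] at this
  set x : Mat K n := 1 - a with hxdef
  set b : Mat K n := ∑ i ∈ Finset.range n, x ^ i with hbdef
  have hxn : x ^ n = 0 := su_pow_n hx.1
  have hab : a * b = 1 := by
    have h1 : (x - 1) * b = x ^ n - 1 := mul_geom_sum x n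
    rw [sub_mul, one_mul, hxn, zero_sub] at h1
    have ha' : a = 1 - x := by rw [hxdef]; abel
    rw [sub_eq_iff_eq_add] at h1
    rw [ha', sub_mul, one_mul, h1]
    abel
  have hba : b * a = 1 := mul_eq_one_comm.mp hab
  have hinv : a⁻¹ = b := Matrix.inv_eq_right_inv hab
  refine ⟨?_, by rw [hinv]; exact hab, by rw [hinv]; exact hba⟩
  show Lvl N j (a⁻¹ - 1)
  rw [hinv]
  have hins : insert 0 (Finset.Ico 1 n) = Finset.range n := by
    ext i; simp [Finset.mem_Ico, Finset.mem_range]; omega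
  have hsplit : b = 1 + ∑ i ∈ Finset.Ico 1 n, x ^ i := by
    rw [hbdef, ← hins, Finset.sum_insert (by simp)]
    rw [pow_zero]
  rw [hsplit, add_sub_cancel_left]
  exact Lvl.sum fun i hi => hx.pow hj i (Finset.mem_Ico.mp hi).1

lemma Gr.inv_mem {N j : ℤ} {a : Mat K n} (ha : a ∈ Gr N j) (hj : 0 ≤ j) (hn : 1 ≤ n) :
    a⁻¹ ∈ Gr N j := (Gr.inv_full ha hj hn).1

lemma Gr.mul_inv {N j : ℤ} {a : Mat K n} (ha : a ∈ Gr N j) (hj : 0 ≤ j) (hn : 1 ≤ n) :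
    a * a⁻¹ = 1 := (Gr.inv_full ha hj hn).2.1

lemma Gr.inv_mul {N j : ℤ} {a : Mat K n} (ha : a ∈ Gr N j) (hj : 0 ≤ j) (hn : 1 ≤ n) :
    a⁻¹ * a = 1 := (Gr.inv_full ha hj hn).2.2

lemma Gr.conj_mem {N j : ℤ} {w z : Mat K n} (hw : w ∈ Gr N 0) (hz : z ∈ Gr N j)
    (hj : 0 ≤ j) (hn : 1 ≤ n) : w * z * w⁻¹ ∈ Gr N j := by
  have hwi : w⁻¹ ∈ Gr N 0 := Gr.inv_mem hw le_rfl hn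
  have hww : w * w⁻¹ = 1 := Gr.mul_inv hw le_rfl hn
  have key : w * z * w⁻¹ - 1 = w * (z - 1) * w⁻¹ := by
    have h : w * (z - 1) * w⁻¹ = w * z * w⁻¹ - w * w⁻¹ := by
      simp only [mul_sub, sub_mul, mul_one]
    rw [h, hww]
  show Lvl N j (w * z * w⁻¹ - 1)
  rw [key]
  exact ((UT_of_Gr hw).mul_lvl hz).mul_ut (UT_of_Gr hwi)

lemma nu_gap_aux {ν : Fin n → ℤ} (hν : StrictDominant ν) :
    ∀ (j : ℕ) (hj : j < n) (p : Fin n), (p : ℕ) < j →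
      ((j : ℤ) - (p : ℤ)) ≤ ν p - ν ⟨j, hj⟩ := by
  intro j
  induction j with
  | zero => intro hj p hp; omega
  | succ j ih =>
      intro hj p hp
      rcases Nat.lt_or_ge (p : ℕ) j with hlt | hge
      · have hjn : j < n := by omega
        have h1 := ih hjn p hlt
        have h2 : ν ⟨j + 1, hj⟩ < ν ⟨j, hjn⟩ := hν _ _ (by simp [Fin.lt_def])
        push_cast at h1 ⊢
        omega
      · have hpj : (p : ℕ) = j := by omega
        have h2 : ν ⟨j + 1, hj⟩ < ν p := hν _ _ (by simp [Fin.lt_def]; omega)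
        push_cast
        omega

lemma nu_gap {ν : Fin n → ℤ} (hν : StrictDominant ν) {p q : Fin n} (h : p < q) :
    ((q : ℤ) - (p : ℤ)) ≤ ν p - ν q := by
  have := nu_gap_aux hν (q : ℕ) q.isLt p h
  simpa [Fin.eta] using this

end Aux

namespace Aux
open Finset
variable {K : Type*} [Field K] {n : ℕ}

/-- The ring homomorphism on Laurent series induced by a field endomorphism. -/
def lmap (φ : K →+* K) : LaurentSeries K →+* LaurentSeries K where
  toFun x := x.map φ
  map_zero' := by ext g; simp
  map_one' := by
    ext g
    simp [HahnSeries.coeff_one]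
  map_add' := fun x y => HahnSeries.map_add (φ : K →+ K)
  map_mul' := fun x y => HahnSeries.map_mul (φ : K →ₙ+* K)

lemma lmap_apply (φ : K →+* K) (x : LaurentSeries K) : lmap φ x = x.map φ := rfl

def Phi (σ : LaurentSeries K → LaurentSeries K) (ν : Fin n → ℤ) (g : Mat K n) : Mat K n :=
  epsDiag K ν * g.map σ * epsDiag K (fun i => -ν i)

variable {φ : K →+* K} {σ : LaurentSeries K → LaurentSeries K}
  (hσφ : ∀ x : LaurentSeries K, σ x = x.map φ) {ν : Fin n → ℤ}

include hσφ in
lemma map_sigma_eq (g : Mat K n) : g.map σ = g.map (lmap φ) := by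
  ext i j
  simp [Matrix.map_apply, hσφ, lmap_apply]

lemma epsDiag_mul_neg (ν : Fin n → ℤ) :
    epsDiag K ν * epsDiag K (fun i => -ν i) = 1 := by
  unfold epsDiag
  rw [Matrix.diagonal_mul_diagonal]
  have h : (fun i => eps K ^ ν i * eps K ^ (-ν i)) = fun _ : Fin n => (1 : LaurentSeries K) := by
    funext i
    rw [eps_zpow_mul, add_neg_cancel, zpow_zero]
  rw [h, Matrix.diagonal_one]

lemma epsDiag_neg_mul (ν : Fin n → ℤ) :
    epsDiag K (fun i => -ν i) * epsDiag K ν = 1 := by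
  unfold epsDiag
  rw [Matrix.diagonal_mul_diagonal]
  have h : (fun i => eps K ^ (-ν i) * eps K ^ ν i) = fun _ : Fin n => (1 : LaurentSeries K) := by
    funext i
    rw [eps_zpow_mul, neg_add_cancel, zpow_zero]
  rw [h, Matrix.diagonal_one]

include hσφ

lemma Phi_one : Phi σ ν (1 : Mat K n) = 1 := by
  unfold Phi
  rw [map_sigma_eq hσφ]
  rw [Matrix.map_one _ (map_zero _) (map_one _), mul_one, epsDiag_mul_neg]

lemma Phi_mul (a b : Mat K n) : Phi σ ν (a * b) = Phi σ ν a * Phi σ ν b := by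
  unfold Phi
  rw [map_sigma_eq hσφ, map_sigma_eq hσφ (g := a), map_sigma_eq hσφ (g := b)]
  rw [Matrix.map_mul]
  have h : epsDiag K (fun i => -ν i) * epsDiag K ν = 1 := epsDiag_neg_mul ν
  calc epsDiag K ν * (a.map (lmap φ) * b.map (lmap φ)) * epsDiag K (fun i => -ν i)
      = epsDiag K ν * a.map (lmap φ) * ((epsDiag K (fun i => -ν i) * epsDiag K ν) *
          (b.map (lmap φ) * epsDiag K (fun i => -ν i))) := by
        rw [h]; simp only [Matrix.mul_assoc, Matrix.one_mul]
    _ = _ := by simp only [Matrix.mul_assoc]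

lemma Phi_sub_one (g : Mat K n) :
    Phi σ ν g - 1 = epsDiag K ν * ((g - 1).map σ) * epsDiag K (fun i => -ν i) := by
  unfold Phi
  rw [map_sigma_eq hσφ (g := g - 1), map_sigma_eq hσφ (g := g)]
  have hsub : (g - 1).map (lmap φ) = g.map (lmap φ) - (1 : Mat K n).map (lmap φ) :=
    Matrix.map_sub _ (fun a b => map_sub (lmap φ) a b) g 1
  rw [hsub, Matrix.map_one _ (map_zero _) (map_one _), Matrix.mul_sub, Matrix.sub_mul,
    mul_one, epsDiag_mul_neg]

lemma Phi_mem {N j : ℤ} {g : Mat K n} (hν : StrictDominant ν) (hg : g ∈ Gr N j) :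
    Phi σ ν g ∈ Gr N (j + 1) := by
  show Lvl N (j + 1) (Phi σ ν g - 1)
  rw [Phi_sub_one hσφ]
  set M : Mat K n := (g - 1).map σ with hM
  have hMentry : ∀ p q : Fin n, M p q = ((g - 1) p q).map φ := by
    intro p q; simp [hM, Matrix.map_apply, hσφ]
  have hentry : ∀ p q : Fin n,
      (epsDiag K ν * M * epsDiag K (fun i => -ν i)) p q
        = eps K ^ ν p * M p q * eps K ^ (-ν q) := by
    intro p q
    unfold epsDiag
    rw [Matrix.mul_diagonal, Matrix.diagonal_mul]
  constructor
  · intro p q h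
    rw [hentry, hMentry, hg.1 p q h]
    have h0 : ((0 : LaurentSeries K).map φ) = 0 := by ext; simp
    rw [h0, mul_zero, zero_mul]
  · intro p q hpq
    rw [hentry]
    have hv : ((((q : ℤ) - (p : ℤ)) * N + j : ℤ) : WithTop ℤ) ≤ val (M p q) := by
      rw [hMentry, val_map]
      exact hg.2 p q hpq
    have hgap : ((q : ℤ) - (p : ℤ)) ≤ ν p - ν q := nu_gap hν hpq
    have hlt : (0 : ℤ) < (q : ℤ) - (p : ℤ) := by
      have : (p : ℕ) < (q : ℕ) := hpq
      omega
    have e1 : (((ν p : ℤ)) : WithTop ℤ) ≤ val (eps K ^ ν p) := by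
      rw [val_eps_zpow]
    have e2 : (((-ν q : ℤ)) : WithTop ℤ) ≤ val (eps K ^ (-ν q)) := by
      rw [val_eps_zpow]
    have big := val_mul_ge (val_mul_ge e1 hv) e2
    refine le_trans ?_ big
    rw [← WithTop.coe_add, ← WithTop.coe_add]
    apply coe_le_coe_int
    linarith

end Aux

namespace Aux
open Finset
variable {K : Type*} [Field K] {n : ℕ}
variable {φ : K →+* K} {σ : LaurentSeries K → LaurentSeries K}
  (hσφ : ∀ x : LaurentSeries K, σ x = x.map φ) {ν : Fin n → ℤ}

lemma mat_inv_one : (1 : Mat K n)⁻¹ = 1 := Matrix.inv_eq_right_inv (one_mul 1)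

noncomputable def Gr.invertible {N j : ℤ} {a : Mat K n} (ha : a ∈ Gr N j) (hj : 0 ≤ j)
    (hn : 1 ≤ n) : Invertible a :=
  invertibleOfRightInverse _ _ (Gr.mul_inv ha hj hn)

lemma fnu_eq (g : Mat K n) : fnu σ ν g = g⁻¹ * Phi σ ν g := by
  unfold fnu Phi
  simp only [Matrix.mul_assoc]

include hσφ in
lemma fnu_one : fnu σ ν (1 : Mat K n) = 1 := by
  rw [fnu_eq, Phi_one hσφ, mat_inv_one, one_mul]

include hσφ in
lemma fnu_mul (a b : Mat K n) : fnu σ ν (a * b) = b⁻¹ * fnu σ ν a * Phi σ ν b := by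
  rw [fnu_eq, fnu_eq, Phi_mul hσφ, Matrix.mul_inv_rev]
  simp only [Matrix.mul_assoc]

include hσφ in
lemma fnu_mem {N : ℤ} (hν : StrictDominant ν) (hn : 1 ≤ n) {g : Mat K n}
    (hg : g ∈ Gr N 0) : fnu σ ν g ∈ Gr N 0 := by
  rw [fnu_eq]
  exact Gr.mul_mem (Gr.inv_mem hg le_rfl hn)
    (Gr.mono (by norm_num) (Phi_mem hσφ hν hg)) le_rfl

lemma sub_one_apply_ne (g : Mat K n) {p q : Fin n} (h : p ≠ q) : (g - 1) p q = g p q := by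
  simp [Matrix.sub_apply, Matrix.one_apply_ne h]

lemma mem_UN_iff {N : ℤ} {g : Mat K n} : g ∈ UN K n N ↔ g ∈ Gr N 0 := by
  constructor
  · rintro ⟨hu, hval⟩
    constructor
    · intro p q h
      rcases eq_or_ne p q with rfl | hne
      · show g p p - (1 : Mat K n) p p = 0
        rw [hu.1 p, Matrix.one_apply_eq, sub_self]
      · have hqp : q < p := lt_of_le_of_ne (le_of_not_gt h) (fun he => hne he.symm)
        rw [sub_one_apply_ne g hne, hu.2 p q hqp]
    · intro p q hpq
      rw [sub_one_apply_ne g (ne_of_lt hpq), add_zero]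
      exact hval p q hpq
  · intro hg
    refine ⟨⟨fun p => ?_, fun p q hqp => ?_⟩, fun p q hpq => ?_⟩
    · have h0 : (g - 1) p p = 0 := hg.1 p p (lt_irrefl p)
      have : g p p - 1 = 0 := by
        simpa [Matrix.sub_apply] using h0
      exact sub_eq_zero.mp this
    · have h0 : (g - 1) p q = 0 := hg.1 p q (not_lt_of_gt hqp)
      rw [sub_one_apply_ne g (ne_of_lt hqp).symm] at h0
      exact h0
    · have := hg.2 p q hpq
      rw [sub_one_apply_ne g (ne_of_lt hpq), add_zero] at this
      exact this

lemma mem_UmN_iff {m N : ℤ} {g : Mat K n} : g ∈ UmN K n m N ↔ g ∈ Gr N m := by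
  constructor
  · rintro ⟨hu, hval⟩
    constructor
    · intro p q h
      rcases eq_or_ne p q with rfl | hne
      · show g p p - (1 : Mat K n) p p = 0
        rw [hu.1 p, Matrix.one_apply_eq, sub_self]
      · have hqp : q < p := lt_of_le_of_ne (le_of_not_gt h) (fun he => hne he.symm)
        rw [sub_one_apply_ne g hne, hu.2 p q hqp]
    · intro p q hpq
      rw [sub_one_apply_ne g (ne_of_lt hpq)]
      exact hval p q hpq
  · intro hg
    refine ⟨⟨fun p => ?_, fun p q hqp => ?_⟩, fun p q hpq => ?_⟩
    · have h0 : (g - 1) p p = 0 := hg.1 p p (lt_irrefl p)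
      have : g p p - 1 = 0 := by
        simpa [Matrix.sub_apply] using h0
      exact sub_eq_zero.mp this
    · have h0 : (g - 1) p q = 0 := hg.1 p q (not_lt_of_gt hqp)
      rw [sub_one_apply_ne g (ne_of_lt hqp).symm] at h0
      exact h0
    · have := hg.2 p q hpq
      rw [sub_one_apply_ne g (ne_of_lt hpq)] at this
      exact this

end Aux

namespace Aux
open Finset
variable {K : Type*} [Field K] {n : ℕ}
variable {φ : K →+* K} {σ : LaurentSeries K → LaurentSeries K}
  (hσφ : ∀ x : LaurentSeries K, σ x = x.map φ) {ν : Fin n → ℤ}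

include hσφ in
lemma sur_step {N j : ℤ} (hν : StrictDominant ν) (hn : 1 ≤ n) (hj : 0 ≤ j)
    {g h : Mat K n} (hg : g ∈ Gr N 0)
    (hr : (fnu σ ν g)⁻¹ * h ∈ Gr N j) :
    ∃ g' ∈ Gr N 0, (fnu σ ν g')⁻¹ * h ∈ Gr N (j + 1) := by
  set fg : Mat K n := fnu σ ν g with hfgdef
  set r : Mat K n := fg⁻¹ * h with hrdef
  have hfg0 : fg ∈ Gr N 0 := fnu_mem hσφ hν hn hg
  have hr' : r ∈ Gr N j := hr
  haveI := Gr.invertible hg le_rfl hn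
  haveI := Gr.invertible hfg0 le_rfl hn
  haveI := Gr.invertible hr' hj hn
  set c : Mat K n := fg * r⁻¹ * fg⁻¹ with hcdef
  have hc : c ∈ Gr N j := Gr.conj_mem hfg0 (Gr.inv_mem hr' hj hn) hj hn
  have hc0 : c ∈ Gr N 0 := Gr.mono hj hc
  haveI := Gr.invertible hc0 le_rfl hn
  refine ⟨g * c, Gr.mul_mem hg hc0 le_rfl, ?_⟩
  have hch : c * h = fg := by
    rw [hcdef, Matrix.mul_assoc (fg * r⁻¹) fg⁻¹ h, ← hrdef,
      Matrix.mul_assoc fg r⁻¹ r, Matrix.inv_mul_of_invertible, mul_one]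
  have hB : (fnu σ ν (g * c))⁻¹ * h = (Phi σ ν c)⁻¹ := by
    rw [fnu_mul hσφ, ← hfgdef]
    calc (c⁻¹ * fg * Phi σ ν c)⁻¹ * h
        = (Phi σ ν c)⁻¹ * (fg⁻¹ * (c⁻¹⁻¹ * h)) := by
          rw [Matrix.mul_inv_rev, Matrix.mul_inv_rev]
          simp only [Matrix.mul_assoc]
      _ = (Phi σ ν c)⁻¹ * (fg⁻¹ * (c * h)) := by
          rw [Matrix.inv_inv_of_invertible]
      _ = (Phi σ ν c)⁻¹ := by
          rw [hch, Matrix.inv_mul_of_invertible, mul_one]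
  rw [hB]
  exact Gr.inv_mem (Phi_mem hσφ hν hc) (by omega) hn

end Aux

open Aux

/-- if `ν` is strictly dominant, `g, g' ∈ U_N` and
`(f_ν(g))⁻¹·f_ν(g') ∈ U_{m,N}`, then `g⁻¹·g' ∈ U_{m,N}`.  Consequently (together with
surjectivity of `f_ν` on cosets, stated as the second conjunct), the map induced by `f_ν`
on the set of right `U_{m,N}`-cosets in `U_N` is a bijection. -/
theorem fnu_injective_mod_UmN (F : Type*) [Field F] [Fintype F]
    (n : ℕ) (hn : 2 ≤ n)
    (σ : LaurentSeries (AlgebraicClosure F) → LaurentSeries (AlgebraicClosure F))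
    (hσ : IsFrobenius (AlgebraicClosure F) (Fintype.card F) σ)
    (ν : Fin n → ℤ) (hν : StrictDominant ν) (N m : ℤ) (hm : 0 < m) :
    (∀ g g' : Matrix (Fin n) (Fin n) (LaurentSeries (AlgebraicClosure F)),
      g ∈ UN (AlgebraicClosure F) n N → g' ∈ UN (AlgebraicClosure F) n N →
      (fnu σ ν g)⁻¹ * fnu σ ν g' ∈ UmN (AlgebraicClosure F) n m N →
      g⁻¹ * g' ∈ UmN (AlgebraicClosure F) n m N) ∧
    (∀ h ∈ UN (AlgebraicClosure F) n N, ∃ g ∈ UN (AlgebraicClosure F) n N,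
      (fnu σ ν g)⁻¹ * h ∈ UmN (AlgebraicClosure F) n m N) := by
  classical
  -- Construct the coefficient ring homomorphism realizing σ.
  set p : ℕ := ringChar F with hpdef
  haveI : CharP F p := ringChar.charP F
  obtain ⟨r, hp, hq⟩ := FiniteField.card F p
  haveI : Fact p.Prime := ⟨hp⟩
  haveI hcharK : CharP (AlgebraicClosure F) p := inferInstance
  let φ : (AlgebraicClosure F) →+* (AlgebraicClosure F) := iterateFrobenius (AlgebraicClosure F) p (r : ℕ)
  have hσφ : ∀ x : LaurentSeries (AlgebraicClosure F), σ x = x.map φ := by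
    intro x
    ext i
    show (σ x).coeff i = φ (x.coeff i)
    rw [hσ x i]
    show (x.coeff i) ^ Fintype.card F = iterateFrobenius (AlgebraicClosure F) p (r : ℕ) (x.coeff i)
    rw [iterateFrobenius_def, hq]
  have hn1 : 1 ≤ n := le_trans (by norm_num) hn
  have hm0 : (0 : ℤ) ≤ m := le_of_lt hm
  constructor
  · -- Injectivity modulo U_{m,N}
    intro g g' hg hg' hv
    rw [Aux.mem_UN_iff] at hg hg'
    rw [Aux.mem_UmN_iff] at hv ⊢
    set u : Matrix (Fin n) (Fin n) (LaurentSeries (AlgebraicClosure F)) := g⁻¹ * g' with hudef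
    set w : Matrix (Fin n) (Fin n) (LaurentSeries (AlgebraicClosure F)) := fnu σ ν g with hwdef
    set v : Matrix (Fin n) (Fin n) (LaurentSeries (AlgebraicClosure F)) := (fnu σ ν g)⁻¹ * fnu σ ν g' with hvdef
    have hu0 : u ∈ Aux.Gr N 0 := Aux.Gr.mul_mem (Aux.Gr.inv_mem hg le_rfl hn1) hg' le_rfl
    have hw0 : w ∈ Aux.Gr N 0 := Aux.fnu_mem hσφ hν hn1 hg
    haveI := Aux.Gr.invertible hg le_rfl hn1
    haveI := Aux.Gr.invertible hu0 le_rfl hn1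
    haveI := Aux.Gr.invertible hw0 le_rfl hn1
    haveI := Aux.Gr.invertible hv hm0 hn1
    have hgu : g * u = g' := by
      rw [hudef, Matrix.mul_inv_cancel_left_of_invertible]
    have hv' : v = w⁻¹ * (u⁻¹ * (w * Phi σ ν u)) := by
      rw [hvdef, ← hgu, Aux.fnu_mul hσφ, ← hwdef]
      simp only [Matrix.mul_assoc]
    have hPhiu0 : Phi σ ν u ∈ Aux.Gr N 0 :=
      Aux.Gr.mono (by norm_num) (Aux.Phi_mem hσφ hν hu0)
    haveI := Aux.Gr.invertible hPhiu0 le_rfl hn1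
    have hid : u = w * (Phi σ ν u * v⁻¹) * w⁻¹ := by
      rw [hv']
      simp [Matrix.mul_inv_rev, Matrix.inv_inv_of_invertible, Matrix.mul_assoc]
    have claim : ∀ k : ℕ, u ∈ Aux.Gr N (min (k : ℤ) m) := by
      intro k
      induction k with
      | zero =>
          have : min ((0 : ℕ) : ℤ) m = 0 := by simp [hm0]
          rw [this]
          exact hu0
      | succ k ih =>
          have hjk : (0 : ℤ) ≤ min (k : ℤ) m := le_min (Int.natCast_nonneg k) hm0
          have hPhi : Phi σ ν u ∈ Aux.Gr N (min (k : ℤ) m + 1) := Aux.Phi_mem hσφ hν ih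
          have hvinv : v⁻¹ ∈ Aux.Gr N m := Aux.Gr.inv_mem hv hm0 hn1
          have ht0 : (0 : ℤ) ≤ min ((k + 1 : ℕ) : ℤ) m :=
            le_min (Int.natCast_nonneg _) hm0
          have hz : Phi σ ν u * v⁻¹ ∈ Aux.Gr N (min ((k + 1 : ℕ) : ℤ) m) := by
            refine Aux.Gr.mul_mem ?_ ?_ ht0
            · refine Aux.Gr.mono ?_ hPhi
              push_cast
              omega
            · exact Aux.Gr.mono (min_le_right _ _) hvinv
          rw [hid]
          exact Aux.Gr.conj_mem hw0 hz ht0 hn1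
    have := claim m.toNat
    rwa [Int.toNat_of_nonneg hm0, min_self] at this
  · -- Surjectivity modulo U_{m,N}
    intro h hh
    rw [Aux.mem_UN_iff] at hh
    have main : ∀ k : ℕ, ∃ g ∈ Aux.Gr N 0,
        (fnu σ ν g)⁻¹ * h ∈ Aux.Gr N (min (k : ℤ) m) := by
      intro k
      induction k with
      | zero =>
          refine ⟨1, Aux.one_mem_Gr, ?_⟩
          rw [Aux.fnu_one hσφ, Aux.mat_inv_one, one_mul]
          have : min ((0 : ℕ) : ℤ) m = 0 := by simp [hm0]
          rw [this]
          exact hh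
      | succ k ih =>
          obtain ⟨g, hg, hr⟩ := ih
          have hjk : (0 : ℤ) ≤ min (k : ℤ) m := le_min (Int.natCast_nonneg k) hm0
          obtain ⟨g', hg', hr'⟩ := Aux.sur_step hσφ hν hn1 hjk hg hr
          refine ⟨g', hg', ?_⟩
          refine Aux.Gr.mono ?_ hr'
          push_cast
          omega
    obtain ⟨g, hg, hr⟩ := main m.toNat
    refine ⟨g, ?_, ?_⟩
    · rw [Aux.mem_UN_iff]
      exact hg
    · rw [Aux.mem_UmN_iff]
      rwa [Int.toNat_of_nonneg hm0, min_self] at hr
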